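/- arXiv:1212.5417 — 2 statements merged into one kernel-verified Lean document; each statement's English description precedes it below -/
import Mathlib

section
/- For all real x₁, y₁, x₂, y₂ with y₁ > 0 and y₂ > 0, if x₁ + x₁/(x₁²+y₁²) = x₂ + x₂/(x₂²+y₂²) and y₁ - y₁/(x₁²+y₁²) = y₂ - y₂/(x₂²+y₂²), then x₁ = x₂ and y₁ = y₂. -/
theorem joukowski_real_inj_upper (x₁ y₁ x₂ y₂ : ℝ)
    (h₁ : 0 < y₁) (h₂ : 0 < y₂)
    (hx : x₁ + x₁ / (x₁^2 + y₁^2) = x₂ + x₂ / (x₂^2 + y₂^2))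
    (hy : y₁ - y₁ / (x₁^2 + y₁^2) = y₂ - y₂ / (x₂^2 + y₂^2)) :
    x₁ = x₂ ∧ y₁ = y₂ := by
  set z : ℂ := ⟨x₁, y₁⟩ with hzdef
  set w : ℂ := ⟨x₂, y₂⟩ with hwdef
  have hz0 : z ≠ 0 := by
    intro h
    have := congrArg Complex.im h
    simp [hzdef] at this
    exact h₁.ne' this
  have hw0 : w ≠ 0 := by
    intro h
    have := congrArg Complex.im h
    simp [hwdef] at this
    exact h₂.ne' this
  have hnz : Complex.normSq z = x₁^2 + y₁^2 := by
    simp [hzdef, Complex.normSq_apply]; ring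
  have hnw : Complex.normSq w = x₂^2 + y₂^2 := by
    simp [hwdef, Complex.normSq_apply]; ring
  have hkey : z + z⁻¹ = w + w⁻¹ := by
    apply Complex.ext
    · simpa [Complex.add_re, Complex.inv_re, hnz, hnw, hzdef, hwdef,
        div_eq_mul_inv, div_eq_mul_inv, pow_two] using hx
    · have : y₁ + -(y₁ / (x₁^2 + y₁^2)) = y₂ + -(y₂ / (x₂^2 + y₂^2)) := by
        linarith [hy]
      simpa [Complex.add_im, Complex.inv_im, hnz, hnw, hzdef, hwdef,
        neg_div, div_eq_mul_inv, pow_two] using this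
  have hfac : (z - w) * (z * w - 1) = 0 := by
    have h := hkey
    field_simp at h
    linear_combination h
  rcases mul_eq_zero.mp hfac with h | h
  · have hzw : z = w := sub_eq_zero.mp h
    constructor
    · simpa [hzdef, hwdef, Complex.ext_iff] using congrArg Complex.re hzw
    · simpa [hzdef, hwdef, Complex.ext_iff] using congrArg Complex.im hzw
  · exfalso
    have hw : w = z⁻¹ := eq_inv_of_mul_eq_one_right (sub_eq_zero.mp h)
    have him : w.im = -y₁ / (x₁^2 + y₁^2) := by
      rw [hw, Complex.inv_im, hnz]
    have hpos : (0:ℝ) < x₁^2 + y₁^2 := by positivity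
    have : w.im < 0 := by rw [him]; exact div_neg_of_neg_of_pos (by linarith) hpos
    simp [hwdef] at this
    linarith
end

section
/- For every z ∈ ℂ with |z| > 1, setting ζ = (1/2)(z + 1/z), we have ζ + √(ζ-1)·√(ζ+1) = z, where √ denotes the principal branch of the complex square root. -/
noncomputable def csqrt (z : ℂ) : ℂ := z ^ (1/2 : ℂ)

open Complex in
lemma csqrt_sq (x : ℂ) : csqrt x ^ 2 = x := by
  simpa [csqrt, one_div] using Complex.cpow_ofNat_inv_pow x 2

open Complex in
lemma csqrt_re_im (x : ℂ) (hx : x ≠ 0) :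
    (csqrt x).re = Real.exp ((Complex.log x).re / 2) * Real.cos (x.arg / 2) ∧
    (csqrt x).im = Real.exp ((Complex.log x).re / 2) * Real.sin (x.arg / 2) := by
  have h : csqrt x = Complex.exp (Complex.log x * (1/2)) := by
    rw [csqrt, Complex.cpow_def_of_ne_zero hx]
  have hre : (Complex.log x * (1/2 : ℂ)).re = (Complex.log x).re / 2 := by
    simp [Complex.mul_re]; ring
  have him : (Complex.log x * (1/2 : ℂ)).im = x.arg / 2 := by
    simp [Complex.mul_im, Complex.log_im]; ring
  rw [h]
  constructor
  · rw [Complex.exp_re, hre, him]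
  · rw [Complex.exp_im, hre, him]

open Complex in
lemma csqrt_re_nonneg (x : ℂ) : 0 ≤ (csqrt x).re := by
  by_cases hx : x = 0
  · simp [csqrt, hx, Complex.zero_cpow (by norm_num : (1/2 : ℂ) ≠ 0)]
  obtain ⟨h1, _⟩ := csqrt_re_im x hx
  rw [h1]
  have ha1 := Complex.neg_pi_lt_arg x
  have ha2 := Complex.arg_le_pi x
  have := Real.pi_pos
  have : 0 ≤ Real.cos (x.arg / 2) :=
    Real.cos_nonneg_of_neg_pi_div_two_le_of_le (by linarith) (by linarith)
  positivity

open Complex in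
lemma csqrt_im_pos_of_re_eq_zero {x : ℂ} (hx : x ≠ 0) (h : (csqrt x).re = 0) :
    0 < (csqrt x).im := by
  obtain ⟨h1, h2⟩ := csqrt_re_im x hx
  rw [h1] at h
  have hexp : (0:ℝ) < Real.exp ((Complex.log x).re / 2) := Real.exp_pos _
  have hcos : Real.cos (x.arg / 2) = 0 := by
    rcases mul_eq_zero.1 h with h' | h'
    · exact absurd h' (ne_of_gt hexp)
    · exact h'
  have ha1 := Complex.neg_pi_lt_arg x
  have ha2 := Complex.arg_le_pi x
  have := Real.pi_pos
  have hsin : 0 < Real.sin (x.arg / 2) := by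
    have : ¬ (x.arg / 2 ∈ Set.Ioo (-(Real.pi/2)) (Real.pi/2)) := by
      intro hmem
      exact absurd hcos (ne_of_gt (Real.cos_pos_of_mem_Ioo hmem))
    have harg : x.arg / 2 = Real.pi / 2 := by
      simp only [Set.mem_Ioo, not_and_or, not_lt] at this
      rcases this with h' | h' <;> linarith
    rw [harg, Real.sin_pi_div_two]; norm_num
  rw [h2]; positivity

theorem joukowski_left_inverse (z : ℂ) (hz : 1 < ‖z‖)
    (ζ : ℂ) (hζ : ζ = (1/2) * (z + 1/z)) :
    ζ + csqrt (ζ - 1) * csqrt (ζ + 1) = z := by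
  have hz0 : z ≠ 0 := by
    intro h; rw [h] at hz; simp at hz; linarith
  have hzeta : 2 * z * ζ = z ^ 2 + 1 := by
    rw [hζ]; field_simp
  have hz1 : z ≠ 1 := by intro h; rw [h] at hz; simp at hz
  have hzm1 : z ≠ -1 := by intro h; rw [h] at hz; simp at hz
  have hm1 : ζ - 1 ≠ 0 := by
    intro h
    have : (z - 1) ^ 2 = 0 := by
      have : 2 * z * (ζ - 1) = (z - 1) ^ 2 := by rw [mul_sub, hzeta]; ring
      rw [h, mul_zero] at this; exact this.symm
    have := pow_eq_zero_iff (n := 2) (by norm_num) |>.1 this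
    exact hz1 (sub_eq_zero.1 this)
  have hp1 : ζ + 1 ≠ 0 := by
    intro h
    have : (z + 1) ^ 2 = 0 := by
      have : 2 * z * (ζ + 1) = (z + 1) ^ 2 := by rw [mul_add, hzeta]; ring
      rw [h, mul_zero] at this; exact this.symm
    have := pow_eq_zero_iff (n := 2) (by norm_num) |>.1 this
    exact hzm1 (eq_neg_of_add_eq_zero_left this)
  set u := csqrt (ζ - 1) with hu
  set v := csqrt (ζ + 1) with hv
  have hu2 : u ^ 2 = ζ - 1 := csqrt_sq _
  have hv2 : v ^ 2 = ζ + 1 := csqrt_sq _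
  set w := z - ζ with hw
  have hsq : (u * v) ^ 2 = w ^ 2 := by
    have : (ζ - 1) * (ζ + 1) = w ^ 2 := by
      rw [hw]
      linear_combination hzeta
    rw [mul_pow, hu2, hv2, this]
  have hor : u * v = w ∨ u * v = -w := sq_eq_sq_iff_eq_or_eq_neg.mp hsq
  rcases hor with h | h
  · rw [h, hw]; ring
  · -- contradiction case
    exfalso
    set s := u + v with hs
    have hds : (v - u) * s = 2 := by
      have : (v - u) * (v + u) = v ^ 2 - u ^ 2 := by ring
      rw [hs]
      calc (v - u) * (u + v) = v ^ 2 - u ^ 2 := by ring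
        _ = 2 := by rw [hu2, hv2]; ring
    have hs0 : s ≠ 0 := by
      intro h0; rw [h0, mul_zero] at hds; norm_num at hds
    have hs2 : s ^ 2 = 2 / z := by
      have : s ^ 2 = u ^ 2 + v ^ 2 + 2 * (u * v) := by rw [hs]; ring
      rw [this, hu2, hv2, h, hw]
      field_simp
      linear_combination 2 * hzeta
    have habs : ‖s‖ ^ 2 = 2 / ‖z‖ := by
      rw [← norm_pow, hs2, norm_div]
      simp
    have habs2 : ‖s‖ ^ 2 < 2 := by
      rw [habs]
      rw [div_lt_iff₀ (by linarith)]
      linarith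
    -- Re u = Re s * (1 - 2/|s|^2)/2, Re v = Re s * (1 + 2/|s|^2)/2
    have hvu : v - u = 2 / s := by
      field_simp
      linear_combination hds
    have hinv : (2 / s).re = 2 * s.re / ‖s‖ ^ 2 := by
      rw [Complex.div_re]
      simp [Complex.normSq_eq_norm_sq]
    have hru : u.re = (s.re - 2 * s.re / ‖s‖ ^ 2) / 2 := by
      have : u = (s - 2/s) / 2 := by
        rw [← hvu, hs]; ring
      rw [this]
      simp [Complex.div_ofNat_re, Complex.sub_re, hinv]
    have hrv : v.re = (s.re + 2 * s.re / ‖s‖ ^ 2) / 2 := by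
      have : v = (s + 2/s) / 2 := by
        rw [← hvu, hs]; ring
      rw [this]
      simp [Complex.div_ofNat_re, Complex.add_re, hinv]
    have hau : 0 ≤ u.re := csqrt_re_nonneg _
    have hav : 0 ≤ v.re := csqrt_re_nonneg _
    have hsabs : 0 < ‖s‖ ^ 2 :=
      pow_pos (norm_pos_iff.mpr hs0) 2
    have hfac : 1 - 2 / ‖s‖ ^ 2 < 0 := by
      rw [sub_neg, lt_div_iff₀ hsabs]; linarith
    have hsre : s.re = 0 := by
      by_contra hne
      rcases lt_or_gt_of_ne hne with hlt | hgt
      · -- s.re < 0 : then v.re < 0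
        have : v.re < 0 := by
          rw [hrv]
          have : s.re + 2 * s.re / ‖s‖ ^ 2 < 0 := by
            have : 2 * s.re / ‖s‖ ^ 2 < 0 := div_neg_of_neg_of_pos (by linarith) hsabs
            linarith
          linarith
        linarith
      · -- s.re > 0 : then u.re < 0
        have : u.re < 0 := by
          rw [hru]
          have h1 : s.re * (1 - 2 / ‖s‖ ^ 2) < 0 :=
            mul_neg_of_pos_of_neg hgt hfac
          have h2 : s.re - 2 * s.re / ‖s‖ ^ 2 = s.re * (1 - 2 / ‖s‖ ^ 2) := by
            ring
          rw [h2]; linarith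
        linarith
    have hure : u.re = 0 := by rw [hru, hsre]; ring
    have hvre : v.re = 0 := by rw [hrv, hsre]; ring
    have huim : 0 < u.im := csqrt_im_pos_of_re_eq_zero hm1 hure
    have hvim : 0 < v.im := csqrt_im_pos_of_re_eq_zero hp1 hvre
    have huv : u * v = -((u.im * v.im : ℝ) : ℂ) := by
      rw [Complex.ext_iff]
      constructor <;> simp [Complex.mul_re, Complex.mul_im, hure, hvre]
    have hwval : w = ((u.im * v.im : ℝ) : ℂ) := by
      have : -w = -((u.im * v.im : ℝ) : ℂ) := by rw [← h, huv]
      exact neg_injective this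
    -- ζ is real: ζ = -1 - v.im^2
    have hzeta_val : ζ = ((-1 - v.im ^ 2 : ℝ) : ℂ) := by
      have h2 : v ^ 2 = -((v.im ^ 2 : ℝ) : ℂ) := by
        rw [Complex.ext_iff]
        constructor <;> simp [pow_two, Complex.mul_re, Complex.mul_im, hvre]
      have h3 := hv2.symm.trans h2
      push_cast at h3 ⊢
      linear_combination h3
    have hkey : z * (ζ - w) = 1 := by
      rw [hw]
      linear_combination hzeta
    have habsz : ‖z‖ * ‖ζ - w‖ = 1 := by
      rw [← norm_mul, hkey, norm_one]
    have hgt1 : 1 < ‖ζ - w‖ := by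
      have : ζ - w = ((-1 - v.im ^ 2 - u.im * v.im : ℝ) : ℂ) := by
        rw [hzeta_val, hwval]; push_cast; ring
      rw [this, Complex.norm_real, Real.norm_eq_abs, abs_of_neg (by nlinarith)]
      nlinarith
    nlinarith [norm_nonneg (ζ - w)]
end
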